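/- Let π : ℝ^n → ℝ^{n'} be a surjective linear map with π(ℤ^n) = ℤ^{n'}, mapping the polytope P onto the full-dimensional rational polytope Q := π(P), and assume P is α-canonical for some α > 0. Then μ(P) ≥ α·μ(Q). In particular, if P is canonical (α = 1), then μ(P) ≥ μ(Q). -/

import Mathlib

open scoped BigOperators Pointwise

noncomputable section

/-- Pairing `⟨a, x⟩ = ∑ aⱼ xⱼ` of an integer linear functional with a real point. -/
def ipair {n : ℕ} (a : Fin n → ℤ) (x : Fin n → ℝ) : ℝ := ∑ j, (a j : ℝ) * x j

/-- An integer vector is primitive if it is nonzero and not a nontrivial integer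
multiple of another integer vector. -/
def IsPrimitive {n : ℕ} (a : Fin n → ℤ) : Prop :=
  a ≠ 0 ∧ ∀ (k : ℤ) (b : Fin n → ℤ), a = k • b → IsUnit k

/-- The set of integer (lattice) points of `ℝⁿ`. -/
def IntPts (n : ℕ) : Set (Fin n → ℝ) := Set.range (fun z : Fin n → ℤ => fun j => (z j : ℝ))

/-- The dimension of a subset of `ℝⁿ` (the dimension of its affine hull). -/
def setDim {n : ℕ} (S : Set (Fin n → ℝ)) : ℕ := Module.finrank ℝ (vectorSpan ℝ S)

/-- An irredundant facet description `P = {x : A x ≥ b}` of an `n`-dimensional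
rational polytope: the rows `aᵢ` of `A` are primitive integer vectors, the right hand
sides are rational, `P` is bounded and `n`-dimensional, every inequality defines a facet
(a face of dimension `n-1`), and no inequality is repeated. -/
structure PolyDesc (n m : ℕ) : Type where
  hm : 0 < m
  A : Fin m → Fin n → ℤ
  b : Fin m → ℚ
  prim : ∀ i, IsPrimitive (A i)
  bounded : Bornology.IsBounded {x : Fin n → ℝ | ∀ i, (b i : ℝ) ≤ ipair (A i) x}
  fulldim : setDim {x : Fin n → ℝ | ∀ i, (b i : ℝ) ≤ ipair (A i) x} = n
  facet_dim : ∀ i, setDim {x : Fin n → ℝ |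
      (∀ j, (b j : ℝ) ≤ ipair (A j) x) ∧ ipair (A i) x = (b i : ℝ)} + 1 = n
  irredundant : Function.Injective (fun i => (A i, b i))

namespace PolyDesc

variable {n m : ℕ} (D : PolyDesc n m)

/-- The polytope `P` itself. -/
def pts : Set (Fin n → ℝ) := {x | ∀ i, (D.b i : ℝ) ≤ ipair (D.A i) x}

/-- Lattice distance `d_{Fᵢ}(x) = ⟨aᵢ, x⟩ - bᵢ` from (the hyperplane spanned by)
the `i`-th facet. -/
def dF (i : Fin m) (x : Fin n → ℝ) : ℝ := ipair (D.A i) x - (D.b i : ℝ)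

/-- Lattice distance `d_P(x) = minᵢ d_{Fᵢ}(x)` from the boundary of `P`. -/
def dist (x : Fin n → ℝ) : ℝ :=
  Finset.univ.inf'
    (Finset.univ_nonempty_iff.mpr (Fin.pos_iff_nonempty.mp D.hm))
    (fun i => D.dF i x)

/-- The adjoint polytope `P⁽ˢ⁾ = {x : d_P(x) ≥ s}`. -/
def adj (s : ℝ) : Set (Fin n → ℝ) := {x | s ≤ D.dist x}

/-- The `i`-th facet `Fᵢ` of `P`. -/
def facet (i : Fin m) : Set (Fin n → ℝ) := {x ∈ D.pts | ipair (D.A i) x = (D.b i : ℝ)}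

/-- The set `{s > 0 : P⁽ˢ⁾ ≠ ∅}`, whose supremum is `μ(P)⁻¹`. -/
def qcdInvSet : Set ℝ := {s : ℝ | 0 < s ∧ (D.adj s).Nonempty}

/-- `μ(P)⁻¹ = sup {s > 0 : P⁽ˢ⁾ ≠ ∅}`. -/
def qcdInv : ℝ := sSup D.qcdInvSet

/-- The ℚ-codegree `μ(P) = (sup {s > 0 : P⁽ˢ⁾ ≠ ∅})⁻¹`. -/
def qcd : ℝ := D.qcdInv⁻¹

/-- The core `core(P) = P^{(1/μ(P))}`. -/
def core : Set (Fin n → ℝ) := D.adj D.qcdInv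

/-- The codegree `cd(P) = min {k ∈ ℕ, k ≥ 1 : int(kP) ∩ ℤⁿ ≠ ∅}`. -/
def codeg : ℕ := sInf {k : ℕ | 0 < k ∧
  ∃ z : Fin n → ℤ, (fun j => (z j : ℝ)) ∈ interior ((k : ℝ) • D.pts)}

end PolyDesc

/-- The face of `S` on which the linear functional `u` is maximized. -/
def argFace {n : ℕ} (S : Set (Fin n → ℝ)) (u : Fin n → ℝ) : Set (Fin n → ℝ) :=
  {x ∈ S | ∀ y ∈ S, ∑ j, u j * y j ≤ ∑ j, u j * x j}

/-- `S` and `T` have the same normal fan: two linear functionals lie in the same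
(relatively open) cone of the normal fan of `S`, i.e. are maximized on the same face
of `S`, iff the same holds for `T`. -/
def SameNormalFan {n : ℕ} (S T : Set (Fin n → ℝ)) : Prop :=
  ∀ u v : Fin n → ℝ, (argFace S u = argFace S v ↔ argFace T u = argFace T v)

/-- The normal fan of `S` refines the normal fan of `T`. -/
def RefinesNormalFan {n : ℕ} (S T : Set (Fin n → ℝ)) : Prop :=
  ∀ u v : Fin n → ℝ, argFace S u = argFace S v → argFace T u = argFace T v

namespace PolyDesc
variable {n m : ℕ} (D : PolyDesc n m)

/-- `{s > 0 : N(P⁽ˢ⁾) = N(P)}`, whose supremum is `τ(P)⁻¹`. -/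
def nefInvSet : Set ℝ := {s : ℝ | 0 < s ∧ SameNormalFan (D.adj s) D.pts}

/-- `τ(P)⁻¹ = sup {s > 0 : N(P⁽ˢ⁾) = N(P)}`. -/
def nefInv : ℝ := sSup D.nefInvSet

/-- The nef value `τ(P)`. -/
def nefVal : ℝ := D.nefInv⁻¹

/-- The set of inequalities active at `x`; the normal cone of the minimal face of `P`
containing `x` is generated by `{aᵢ : i ∈ active x}`, and all cones of the normal fan
of `P` arise in this way. -/
def active (x : Fin n → ℝ) : Set (Fin m) := {i | ipair (D.A i) x = (D.b i : ℝ)}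

/-- The normal cone at the vertex `v` is ℚ-Gorenstein of index `r`, witnessed by the
primitive lattice point `u = u_σ` with `⟨aᵢ, u⟩ = r` for all active `i`. -/
def VertexQG (v : Fin n → ℝ) (u : Fin n → ℤ) (r : ℤ) : Prop :=
  IsPrimitive u ∧ 0 < r ∧ ∀ i ∈ D.active v, (∑ j, D.A i j * u j) = r

/-- The normal fan of `P` is ℚ-Gorenstein: every maximal cone (normal cone of a
vertex, i.e. of an extreme point) is ℚ-Gorenstein. -/
def QGorenstein : Prop := ∀ v ∈ Set.extremePoints ℝ D.pts, ∃ u r, D.VertexQG v u r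

end PolyDesc

/-- The point `v(s) = v + (s/r_σ) • u_σ`. -/
def vmove {n : ℕ} (v : Fin n → ℝ) (s : ℝ) (u : Fin n → ℤ) (r : ℤ) : Fin n → ℝ :=
  v + (s / (r : ℝ)) • (fun j => ((u j : ℝ)))

/-- The height of a point `y` in the cone generated by `{aᵢ : i ∈ I}`:
`ht(y) = max {∑ λᵢ : λᵢ ≥ 0, ∑ λᵢ aᵢ = y}`. -/
def coneHeight {n m : ℕ} (D : PolyDesc n m) (I : Set (Fin m)) (y : Fin n → ℝ) : ℝ :=
  sSup {t : ℝ | ∃ c : Fin m → ℝ, (∀ i, 0 ≤ c i) ∧ (∀ i ∉ I, c i = 0) ∧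
    (y = ∑ i, c i • (fun j => ((D.A i j : ℝ)))) ∧ t = ∑ i, c i}

/-- `P` is α-canonical: for every cone `σ` of the normal fan of `P` (the normal cone
of the minimal face containing a point `x ∈ P`, generated by `{aᵢ : i ∈ active x}`),
every nonzero lattice point of `σ` has height at least `α`. -/
def AlphaCanonical {n m : ℕ} (D : PolyDesc n m) (α : ℝ) : Prop :=
  ∀ x ∈ D.pts, ∀ z : Fin n → ℤ, z ≠ 0 →
    (∃ c : Fin m → ℝ, (∀ i, 0 ≤ c i) ∧ (∀ i ∉ D.active x, c i = 0) ∧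
      ((fun j => ((z j : ℝ))) = ∑ i, c i • (fun j => ((D.A i j : ℝ))))) →
    α ≤ coneHeight D (D.active x) (fun j => ((z j : ℝ)))

/-- `P` is a lattice polytope: the convex hull of finitely many integer points. -/
def IsLatticePoly {n : ℕ} (P : Set (Fin n → ℝ)) : Prop :=
  ∃ V : Finset (Fin n → ℤ),
    P = convexHull ℝ ((fun z : Fin n → ℤ => fun j => ((z j : ℝ))) '' (V : Set (Fin n → ℤ)))

/-- The `i`-th standard basis vector of `ℝᵗ`. -/
def stdBasisVec (t : ℕ) (i : Fin t) : Fin t → ℝ := fun j => if j = i then 1 else 0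

/-- The marking vectors of a Cayley sum: `0, e₁, …, e_t ∈ ℝᵗ`. -/
def cayleyVec (t : ℕ) : Fin (t + 1) → (Fin t → ℝ) :=
  fun j => if h : (j : ℕ) = 0 then 0 else stdBasisVec t ⟨(j : ℕ) - 1, by have := j.isLt; omega⟩

/-- The Cayley sum `Q₀ * ⋯ * Q_t = conv((Q₀ × {0}) ∪ (Q₁ × {e₁}) ∪ ⋯ ∪ (Q_t × {e_t}))`. -/
def cayleySum {k t : ℕ} (Q : Fin (t + 1) → Set (Fin k → ℝ)) :
    Set ((Fin k → ℝ) × (Fin t → ℝ)) :=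
  convexHull ℝ (⋃ j, (Q j) ×ˢ ({cayleyVec t j} : Set (Fin t → ℝ)))

/-- `P ⊆ ℝⁿ` is a Cayley polytope `P₀ * ⋯ * P_t` of length `t+1` of lattice polytopes
`Pⱼ ⊆ ℝᵏ` with `k + t = n`: some affine lattice isomorphism `ℤⁿ ≅ ℤᵏ × ℤᵗ`
identifies `P` with such a Cayley sum. -/
def IsCayley {n : ℕ} (P : Set (Fin n → ℝ)) (k t : ℕ) : Prop :=
  k + t = n ∧
  ∃ Q : Fin (t + 1) → Finset (Fin k → ℤ), (∀ j, (Q j).Nonempty) ∧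
  ∃ f : (Fin n → ℝ) ≃ᵃ[ℝ] (Fin k → ℝ) × (Fin t → ℝ),
    f '' IntPts n = (IntPts k) ×ˢ (IntPts t) ∧
    f '' P = cayleySum (fun j =>
      convexHull ℝ ((fun z : Fin k → ℤ => fun i => ((z i : ℝ))) '' (Q j : Set (Fin k → ℤ))))

/-- The unimodular simplex `Δₙ = conv(0, e₁, …, eₙ)`. -/
def unimodSimplex (n : ℕ) : Set (Fin n → ℝ) :=
  convexHull ℝ (insert (0 : Fin n → ℝ) (Set.range (stdBasisVec n)))

/-- Two subsets of `ℝⁿ` are unimodularly equivalent: an affine lattice automorphism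
maps one onto the other. -/
def UnimodEquiv {n : ℕ} (P P' : Set (Fin n → ℝ)) : Prop :=
  ∃ f : (Fin n → ℝ) ≃ᵃ[ℝ] (Fin n → ℝ), f '' IntPts n = IntPts n ∧ f '' P = P'

/-- The codegree `cd(P) = min {k ∈ ℕ, k ≥ 1 : int(kP) ∩ ℤⁿ ≠ ∅}` of a polytope given
as a set. -/
def codegS {n : ℕ} (P : Set (Fin n → ℝ)) : ℕ :=
  sInf {k : ℕ | 0 < k ∧ ∃ z : Fin n → ℤ, (fun j => (z j : ℝ)) ∈ interior ((k : ℝ) • P)}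

/-- `P` has lattice width one: some nonzero integer linear functional has minimum `c`
and maximum `c + 1` on `P`. -/
def HasLatticeWidthOne {n : ℕ} (P : Set (Fin n → ℝ)) : Prop :=
  ∃ u : Fin n → ℤ, u ≠ 0 ∧ ∃ c : ℤ,
    (∀ x ∈ P, (c : ℝ) ≤ ipair u x ∧ ipair u x ≤ (c : ℝ) + 1) ∧
    (∃ x ∈ P, ipair u x = (c : ℝ)) ∧ (∃ x ∈ P, ipair u x = (c : ℝ) + 1)

/-- `P` is a lattice pyramid: for some primitive `u`, `P` is the convex hull of a base
lying in the lattice hyperplane `{⟨u, ·⟩ = c}` and an apex at lattice distance one from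
it (this is equivalent to being unimodularly equivalent to
`conv((Q × {0}) ∪ {(0, …, 0, 1)})` for an `(n-1)`-dimensional lattice polytope `Q`). -/
def IsLatticePyramid {n : ℕ} (P : Set (Fin n → ℝ)) : Prop :=
  ∃ u : Fin n → ℤ, IsPrimitive u ∧ ∃ c : ℤ, ∃ apex ∈ P,
    ipair u apex = (c : ℝ) + 1 ∧
    P = convexHull ℝ ({x ∈ P | ipair u x = (c : ℝ)} ∪ {apex})

/-- `F` is a facet of `S`: an exposed face of dimension `dim S - 1`. -/
def IsFacetOf {n : ℕ} (F S : Set (Fin n → ℝ)) : Prop :=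
  IsExposed ℝ S F ∧ F.Nonempty ∧ setDim F + 1 = setDim S

lemma S10.sum_support_subtype {ι M : Type*} [Fintype ι] [AddCommMonoid M] (p : ι → Prop)
    [DecidablePred p] (f : ι → M) (hf : ∀ i, ¬ p i → f i = 0) :
    ∑ i : Subtype p, f ↑i = ∑ i, f i := by
  rw [← Finset.sum_subtype (Finset.univ.filter p) (by simp) f]
  exact Finset.sum_subset (Finset.subset_univ _) (fun i _ hi => hf i (by simpa using hi))

lemma S10.carath {ι : Type*} [Fintype ι] {V : Type*} [AddCommGroup V] [Module ℝ V]
    (v : ι → V) (c : ι → ℝ) (hc : ∀ i, 0 ≤ c i) :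
    ∃ c' : ι → ℝ, (∀ i, 0 ≤ c' i) ∧ (∀ i, c' i ≠ 0 → c i ≠ 0) ∧
      (∑ i, c' i • v i = ∑ i, c i • v i) ∧
      LinearIndependent ℝ (fun i : {i // c' i ≠ 0} => v ↑i) := by
  classical
  generalize hk : (Finset.univ.filter (fun i => c i ≠ 0)).card = k
  induction k using Nat.strong_induction_on generalizing c with
  | _ k ih =>
  by_cases hli : LinearIndependent ℝ (fun i : {i // c i ≠ 0} => v ↑i)
  · exact ⟨c, hc, fun i h => h, rfl, hli⟩
  obtain ⟨g, hg0, i₀, hi₀⟩ := Fintype.not_linearIndependent_iff.mp hli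
  set d : ι → ℝ := fun i => if h : c i ≠ 0 then g ⟨i, h⟩ else 0 with hd
  have hdsupp : ∀ i, c i = 0 → d i = 0 := fun i h => by simp [hd, h]
  have hdsum : ∑ i, d i • v i = 0 := by
    rw [← S10.sum_support_subtype (fun i => c i ≠ 0) (fun i => d i • v i)
      (fun i h => by simp [hd, not_not.mp h])]
    rw [← hg0]
    exact Finset.sum_congr rfl (fun i _ => by simp [hd, i.2])
  have hdi₀ : d ↑i₀ ≠ 0 := by simpa [hd, i₀.2] using hi₀
  obtain ⟨e, hesum, hesupp, i₁, hi₁⟩ :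
      ∃ e : ι → ℝ, ∑ i, e i • v i = 0 ∧ (∀ i, c i = 0 → e i = 0) ∧ ∃ i, 0 < e i := by
    rcases hdi₀.lt_or_gt with h | h
    · refine ⟨-d, by simpa using hdsum, fun i hi => by simp [hdsupp i hi], ↑i₀, by
        simpa using h⟩
    · exact ⟨d, hdsum, hdsupp, ↑i₀, h⟩
  set s : Finset ι := Finset.univ.filter (fun i => 0 < e i) with hs
  have hsne : s.Nonempty := ⟨i₁, by simp [hs, hi₁]⟩
  set t : ℝ := s.inf' hsne (fun i => c i / e i) with ht
  have htnn : 0 ≤ t := by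
    rw [ht, Finset.le_inf'_iff]
    intro i hi
    exact div_nonneg (hc i) (le_of_lt (by simpa [hs] using hi))
  obtain ⟨i₂, hi₂s, hi₂⟩ := Finset.exists_mem_eq_inf' hsne (fun i => c i / e i)
  have hei₂ : 0 < e i₂ := by simpa [hs] using hi₂s
  set c' : ι → ℝ := fun i => c i - t * e i with hc'
  have hc'nn : ∀ i, 0 ≤ c' i := by
    intro i
    rcases le_or_gt (e i) 0 with h | h
    · have : t * e i ≤ 0 := mul_nonpos_of_nonneg_of_nonpos htnn h
      simp only [hc']; linarith [hc i]
    · have : t ≤ c i / e i := by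
        rw [ht]; exact Finset.inf'_le _ (by simp [hs, h])
      have := (le_div_iff₀ h).mp this
      simp only [hc']; linarith
  have hc'supp : ∀ i, c' i ≠ 0 → c i ≠ 0 := by
    intro i hi hci
    exact hi (by simp [hc', hci, hesupp i hci])
  have hc'sum : ∑ i, c' i • v i = ∑ i, c i • v i := by
    simp only [hc', sub_smul, Finset.sum_sub_distrib, mul_smul]
    rw [← Finset.smul_sum, hesum, smul_zero, sub_zero]
  have hci₂ : c i₂ ≠ 0 := fun h => by
    have := hesupp i₂ h; rw [this] at hei₂; exact lt_irrefl 0 hei₂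
  have hc'i₂ : c' i₂ = 0 := by
    have : c' i₂ = c i₂ - (c i₂ / e i₂) * e i₂ := by rw [hc']; rw [← hi₂]
    rw [this]; field_simp; ring
  have hcard : (Finset.univ.filter (fun i => c' i ≠ 0)).card < k := by
    rw [← hk]
    apply Finset.card_lt_card
    constructor
    · intro i hi
      simp only [Finset.mem_filter, Finset.mem_univ, true_and] at *
      exact hc'supp i hi
    · intro hsub
      have := hsub (by simp [hci₂] : i₂ ∈ Finset.univ.filter (fun i => c i ≠ 0))
      simp [hc'i₂] at this
  obtain ⟨c'', h1, h2, h3, h4⟩ := ih _ hcard c' hc'nn rfl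
  exact ⟨c'', h1, fun i hi => hc'supp i (h2 i hi), h3.trans hc'sum, h4⟩

/-- The linear map sending coefficients to the combination. -/
def S10.comb {n : ℕ} {ι : Type*} [Fintype ι] (v : ι → (Fin n → ℝ)) :
    (ι → ℝ) →ₗ[ℝ] (Fin n → ℝ) where
  toFun c := ∑ i, c i • v i
  map_add' c d := by simp [add_smul, Finset.sum_add_distrib]
  map_smul' r c := by simp [smul_smul, Finset.smul_sum]

lemma S10.isClosed_cone_li {n : ℕ} {ι : Type*} [Fintype ι] (v : ι → (Fin n → ℝ))
    (hli : LinearIndependent ℝ v) :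
    IsClosed {x : Fin n → ℝ | ∃ c : ι → ℝ, (∀ i, 0 ≤ c i) ∧ x = ∑ i, c i • v i} := by
  have hker : LinearMap.ker (S10.comb v) = ⊥ := by
    rw [LinearMap.ker_eq_bot']
    intro g hg
    exact funext (Fintype.linearIndependent_iff.mp hli g hg)
  have hemb := LinearMap.isClosedEmbedding_of_injective hker
  have : {x : Fin n → ℝ | ∃ c : ι → ℝ, (∀ i, 0 ≤ c i) ∧ x = ∑ i, c i • v i}
      = (S10.comb v) '' {c : ι → ℝ | ∀ i, 0 ≤ c i} := by
    ext x
    constructor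
    · rintro ⟨c, hc, rfl⟩; exact ⟨c, hc, rfl⟩
    · rintro ⟨c, hc, rfl⟩; exact ⟨c, hc, rfl⟩
  rw [this]
  apply hemb.isClosedMap
  have : {c : ι → ℝ | ∀ i, 0 ≤ c i} = ⋂ i, (fun c : ι → ℝ => c i) ⁻¹' (Set.Ici 0) := by
    ext c; simp [Set.mem_iInter]
  rw [this]
  exact isClosed_iInter (fun i => isClosed_Ici.preimage (continuous_apply i))

lemma S10.isClosed_coneT {n m : ℕ} (v : Fin m → (Fin n → ℝ)) (T : Finset (Fin m))
    (hli : LinearIndependent ℝ (fun i : T => v ↑i)) :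
    IsClosed {x : Fin n → ℝ | ∃ c : Fin m → ℝ, (∀ i, 0 ≤ c i) ∧ (∀ i ∉ T, c i = 0) ∧
      x = ∑ i, c i • v i} := by
  have key : {x : Fin n → ℝ | ∃ c : Fin m → ℝ, (∀ i, 0 ≤ c i) ∧ (∀ i ∉ T, c i = 0) ∧
        x = ∑ i, c i • v i}
      = {x : Fin n → ℝ | ∃ c : T → ℝ, (∀ i, 0 ≤ c i) ∧ x = ∑ i : T, c i • v ↑i} := by
    ext x
    constructor
    · rintro ⟨c, hc, hs, rfl⟩
      refine ⟨fun i => c ↑i, fun i => hc ↑i, ?_⟩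
      rw [Finset.sum_coe_sort T (fun i => c i • v i)]
      exact (Finset.sum_subset (Finset.subset_univ T) (fun i _ hi => by rw [hs i hi, zero_smul])).symm
    · rintro ⟨c, hc, rfl⟩
      classical
      refine ⟨fun i => if h : i ∈ T then c ⟨i, h⟩ else 0, fun i => ?_, fun i hi => dif_neg hi, ?_⟩
      · dsimp only; split
        · exact hc _
        · exact le_refl 0
      · have h1 : ∑ i : T, c i • v ↑i
            = ∑ i : T, (fun k => if h : k ∈ T then c ⟨k, h⟩ else 0) ↑i • v ↑i :=
          Finset.sum_congr rfl (fun i _ => by simp only [dif_pos i.2])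
      
        rw [h1, Finset.sum_coe_sort T (fun k => (if h : k ∈ T then c ⟨k, h⟩ else 0) • v k)]
        exact Finset.sum_subset (Finset.subset_univ T) (fun i _ hi => by rw [dif_neg hi, zero_smul])
  rw [key]
  exact S10.isClosed_cone_li (fun i : T => v ↑i) hli

lemma S10.isClosed_cone {n m : ℕ} (v : Fin m → (Fin n → ℝ)) (I : Set (Fin m)) :
    IsClosed {x : Fin n → ℝ | ∃ c : Fin m → ℝ, (∀ i, 0 ≤ c i) ∧ (∀ i ∉ I, c i = 0) ∧
      x = ∑ i, c i • v i} := by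
  classical
  have key : {x : Fin n → ℝ | ∃ c : Fin m → ℝ, (∀ i, 0 ≤ c i) ∧ (∀ i ∉ I, c i = 0) ∧
        x = ∑ i, c i • v i}
      = ⋃ (T : Finset (Fin m)) (_ : ↑T ⊆ I ∧ LinearIndependent ℝ (fun i : T => v ↑i)),
        {x : Fin n → ℝ | ∃ c : Fin m → ℝ, (∀ i, 0 ≤ c i) ∧ (∀ i ∉ T, c i = 0) ∧
          x = ∑ i, c i • v i} := by
    ext x
    simp only [Set.mem_setOf_eq, Set.mem_iUnion]
    constructor
    · rintro ⟨c, hc, hcsupp, rfl⟩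
      obtain ⟨c', h1, h2, h3, h4⟩ := S10.carath v c hc
      set T : Finset (Fin m) := Finset.univ.filter (fun i => c' i ≠ 0) with hT
      have hmem : ∀ i : T, c' ↑i ≠ 0 := fun i => by
        have h := i.2
        simp only [hT, Finset.mem_filter] at h
        exact h.2
      refine ⟨T, ⟨?_, ?_⟩, c', h1, fun i hi => ?_, h3.symm⟩
      · intro i hi
        simp only [hT, Finset.coe_filter, Set.mem_setOf_eq, Finset.mem_univ, true_and] at hi
        by_contra hne
        exact h2 i hi (hcsupp i hne)
      · refine h4.comp (fun i : T => (⟨↑i, hmem i⟩ : {j // c' j ≠ 0})) ?_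
        intro i j hij
        have h5 : (⟨↑i, hmem i⟩ : {j // c' j ≠ 0}) = ⟨↑j, hmem j⟩ := hij
        exact Subtype.ext (by simpa using h5)
      · by_contra hne
        exact hi (by simp [hT, hne])
    · rintro ⟨T, ⟨hTI, _⟩, c, hc, hs, rfl⟩
      exact ⟨c, hc, fun i hi => hs i (fun hT => hi (hTI hT)), rfl⟩
  rw [key]
  exact isClosed_iUnion_of_finite (fun T => isClosed_iUnion_of_finite (fun hT =>
    S10.isClosed_coneT v T hT.2))

lemma S10.rpair_add {n : ℕ} (a x w : Fin n → ℝ) (ε : ℝ) :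
    (∑ j, a j * (x j + ε * w j)) = (∑ j, a j * x j) + ε * (∑ j, a j * w j) := by
  rw [Finset.mul_sum, ← Finset.sum_add_distrib]
  exact Finset.sum_congr rfl (fun j _ => by ring)

lemma S10.eval_lin {n : ℕ} (f : (Fin n → ℝ) →L[ℝ] ℝ) (z : Fin n → ℝ) :
    f z = ∑ j, z j * f (Pi.single j 1 : Fin n → ℝ) := by
  have hz : z = ∑ j, z j • (Pi.single j 1 : Fin n → ℝ) := by
    refine (Finset.univ_sum_single z).symm.trans ?_
    exact Finset.sum_congr rfl (fun j _ => by
      rw [← Pi.single_smul, smul_eq_mul, mul_one])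
  conv_lhs => rw [hz]
  rw [map_sum]
  exact Finset.sum_congr rfl (fun j _ => by rw [map_smul, smul_eq_mul])

/-- Farkas lemma at a minimizer: the objective is a nonnegative combination of the
active constraint normals. -/
lemma S10.farkas {n m : ℕ} (hm : 0 < m) (A : Fin m → Fin n → ℝ) (b : Fin m → ℝ)
    (a : Fin n → ℝ) (x0 : Fin n → ℝ) (hx0 : ∀ i, b i ≤ ∑ j, A i j * x0 j)
    (hmin : ∀ x : Fin n → ℝ, (∀ i, b i ≤ ∑ j, A i j * x j) →
      ∑ j, a j * x0 j ≤ ∑ j, a j * x j) :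
    ∃ c : Fin m → ℝ, (∀ i, 0 ≤ c i) ∧ (∀ i, ∑ j, A i j * x0 j ≠ b i → c i = 0) ∧
      a = ∑ i, c i • A i := by
  classical
  set I : Set (Fin m) := {i | ∑ j, A i j * x0 j = b i} with hI
  set C : Set (Fin n → ℝ) := {y | ∃ c : Fin m → ℝ, (∀ i, 0 ≤ c i) ∧ (∀ i ∉ I, c i = 0) ∧
      y = ∑ i, c i • A i} with hC
  by_cases haC : a ∈ C
  · obtain ⟨c, h1, h2, h3⟩ := haC
    exact ⟨c, h1, fun i hi => h2 i hi, h3⟩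
  exfalso
  have hconv : Convex ℝ C := by
    rintro y ⟨cy, hcy, hcys, rfl⟩ z ⟨cz, hcz, hczs, rfl⟩ p q hp hq hpq
    refine ⟨fun i => p * cy i + q * cz i,
      fun i => by have := hcy i; have := hcz i; positivity,
      fun i hi => by dsimp only; rw [hcys i hi, hczs i hi, mul_zero, mul_zero, add_zero], ?_⟩
    have hpt : ∀ i : Fin m, (p * cy i + q * cz i) • A i
        = p • (cy i • A i) + q • (cz i • A i) := fun i => by
      rw [add_smul, smul_smul, smul_smul]
    rw [Finset.sum_congr rfl (fun i _ => hpt i), Finset.sum_add_distrib,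
      ← Finset.smul_sum, ← Finset.smul_sum]
  have hclosed : IsClosed C := S10.isClosed_cone A I
  obtain ⟨f, u, hfC, hfa⟩ := geometric_hahn_banach_closed_point hconv hclosed haC
  have h0C : (0 : Fin n → ℝ) ∈ C :=
    ⟨0, fun i => le_refl 0, fun i _ => rfl, by simp⟩
  have hu : 0 < u := by have := hfC 0 h0C; simpa using this
  have hfle : ∀ y ∈ C, f y ≤ 0 := by
    intro y hy
    by_contra hpos
    push_neg at hpos
    obtain ⟨cy, hcy, hcys, rfl⟩ := hy
    set S : Fin n → ℝ := ∑ i, cy i • A i with hS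
    have hmemC : ((u + 1) / f S) • S ∈ C := by
      refine ⟨fun i => ((u + 1) / f S) * cy i,
        fun i => mul_nonneg (by positivity) (hcy i),
        fun i hi => by dsimp only; rw [hcys i hi, mul_zero], ?_⟩
      rw [hS, Finset.smul_sum]
      exact Finset.sum_congr rfl (fun i _ => by dsimp only; rw [smul_smul])
    have hlt := hfC _ hmemC
    rw [map_smul, smul_eq_mul, div_mul_cancel₀ _ (ne_of_gt hpos)] at hlt
    linarith
  set w : Fin n → ℝ := fun j => -f (Pi.single j 1 : Fin n → ℝ) with hw
  have hwpair : ∀ z : Fin n → ℝ, ∑ j, z j * w j = -f z := by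
    intro z
    rw [S10.eval_lin f z, ← Finset.sum_neg_distrib]
    exact Finset.sum_congr rfl (fun j _ => by rw [hw]; ring)
  have hwa : ∑ j, a j * w j < 0 := by
    rw [hwpair a]; linarith
  have hwA : ∀ i ∈ I, 0 ≤ ∑ j, A i j * w j := by
    intro i hi
    have hAiC : A i ∈ C := by
      refine ⟨fun k => if k = i then 1 else 0, fun k => by positivity,
        fun k hk => by
          dsimp only
          rw [if_neg]
          intro h
          exact hk (by rw [h]; exact hi), ?_⟩
      have : ∀ k : Fin m, (if k = i then (1:ℝ) else 0) • A k
          = if k = i then A k else 0 := fun k => by split <;> simp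
      rw [Finset.sum_congr rfl (fun k _ => this k), Finset.sum_ite_eq' Finset.univ i A,
        if_pos (Finset.mem_univ i)]
    have := hfle _ hAiC
    rw [hwpair (A i)]
    linarith
  haveI : Nonempty (Fin m) := Fin.pos_iff_nonempty.mp hm
  set g : Fin m → ℝ := fun i => if ∑ j, A i j * x0 j = b i then 1
    else ((∑ j, A i j * x0 j) - b i) / (1 + |∑ j, A i j * w j|) with hg
  have hgpos : ∀ i, 0 < g i := by
    intro i
    rw [hg]
    dsimp only
    split
    · exact one_pos
    · next h =>
      have : 0 < (∑ j, A i j * x0 j) - b i := by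
        rcases lt_or_eq_of_le (hx0 i) with h' | h'
        · linarith
        · exact absurd h'.symm h
      positivity
  set ε : ℝ := Finset.univ.inf' Finset.univ_nonempty g with hε
  have hεpos : 0 < ε := by
    rw [hε, Finset.lt_inf'_iff]
    exact fun i _ => hgpos i
  have hx1mem : ∀ i, b i ≤ ∑ j, A i j * (x0 j + ε * w j) := by
    intro i
    rw [S10.rpair_add (A i) x0 w ε]
    by_cases hi : ∑ j, A i j * x0 j = b i
    · have := hwA i hi
      rw [hi]
      nlinarith
    · have hslack : 0 < (∑ j, A i j * x0 j) - b i := by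
        rcases lt_or_eq_of_le (hx0 i) with h' | h'
        · linarith
        · exact absurd h'.symm hi
      have h2 : ε ≤ g i := Finset.inf'_le g (Finset.mem_univ i)
      rw [hg] at h2
      simp only [if_neg hi] at h2
      have habs : 0 < 1 + |∑ j, A i j * w j| := by positivity
      have h1 : ε * (1 + |∑ j, A i j * w j|) ≤ (∑ j, A i j * x0 j) - b i :=
        (le_div_iff₀ habs).mp h2
      nlinarith [neg_abs_le (∑ j, A i j * w j), abs_nonneg (∑ j, A i j * w j)]
  have hfin := hmin (fun j => x0 j + ε * w j) hx1mem
  rw [S10.rpair_add a x0 w ε] at hfin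
  nlinarith

section S10geom
variable {n m : ℕ} (D : PolyDesc n m)

lemma S10.continuous_ipair (a : Fin n → ℤ) : Continuous (fun x : Fin n → ℝ => ipair a x) := by
  unfold ipair
  exact continuous_finset_sum _ (fun j _ => (continuous_const.mul (continuous_apply j)))

lemma S10.pts_isClosed : IsClosed D.pts := by
  have : D.pts = ⋂ i, {x : Fin n → ℝ | (D.b i : ℝ) ≤ ipair (D.A i) x} := by
    ext x; simp [PolyDesc.pts, Set.mem_iInter]
  rw [this]
  exact isClosed_iInter (fun i => isClosed_le continuous_const (S10.continuous_ipair (D.A i)))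

lemma S10.pts_isCompact : IsCompact D.pts :=
  Metric.isCompact_of_isClosed_isBounded (S10.pts_isClosed D) D.bounded

lemma S10.pts_convex : Convex ℝ D.pts := by
  intro x hx y hy p q hp hq hpq
  intro i
  have h1 : ipair (D.A i) (p • x + q • y) = p * ipair (D.A i) x + q * ipair (D.A i) y := by
    unfold ipair
    rw [Finset.mul_sum, Finset.mul_sum, ← Finset.sum_add_distrib]
    exact Finset.sum_congr rfl (fun j _ => by simp [Pi.add_apply, Pi.smul_apply]; ring)
  rw [h1]
  have hx2 : (D.b i : ℝ) ≤ ipair (D.A i) x := hx i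
  have hy2 : (D.b i : ℝ) ≤ ipair (D.A i) y := hy i
  have hb : p * (D.b i : ℝ) + q * (D.b i : ℝ) = (D.b i : ℝ) := by
    rw [← add_mul, hpq, one_mul]
  linarith [mul_le_mul_of_nonneg_left hx2 hp, mul_le_mul_of_nonneg_left hy2 hq]

lemma S10.adj_subset_pts {s : ℝ} (hs : 0 ≤ s) : D.adj s ⊆ D.pts := by
  intro x hx i
  have h1 : D.dist x ≤ D.dF i x := Finset.inf'_le _ (Finset.mem_univ i)
  have h2 : s ≤ D.dist x := hx
  have : 0 ≤ D.dF i x := by linarith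
  unfold PolyDesc.dF at this
  linarith

/-- there is a point where every inequality is strict. -/
lemma S10.exists_strict : ∃ x : Fin n → ℝ, ∀ i, (D.b i : ℝ) < ipair (D.A i) x := by
  classical
  have hn : 0 < n := by
    have h := D.facet_dim ⟨0, D.hm⟩
    omega
  have hPne : D.pts.Nonempty := by
    by_contra h
    rw [Set.not_nonempty_iff_eq_empty] at h
    have h2 := D.fulldim
    have : setDim (∅ : Set (Fin n → ℝ)) = 0 := by
      unfold setDim
      rw [vectorSpan_empty, finrank_bot]
    rw [show {x : Fin n → ℝ | ∀ i, (D.b i : ℝ) ≤ ipair (D.A i) x} = D.pts from rfl, h, this] at h2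
    omega
  have hspan : vectorSpan ℝ D.pts = ⊤ := by
    apply Submodule.eq_top_of_finrank_eq
    have := D.fulldim
    rw [show {x : Fin n → ℝ | ∀ i, (D.b i : ℝ) ≤ ipair (D.A i) x} = D.pts from rfl] at this
    unfold setDim at this
    rw [this, Module.finrank_pi, Fintype.card_fin]
  have haff : affineSpan ℝ D.pts = ⊤ :=
    (AffineSubspace.affineSpan_eq_top_iff_vectorSpan_eq_top_of_nonempty ℝ (Fin n → ℝ) (Fin n → ℝ) hPne).mpr hspan
  obtain ⟨x, hx⟩ := ((S10.pts_convex D).interior_nonempty_iff_affineSpan_eq_top).mpr haff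
  refine ⟨x, fun i => ?_⟩
  have hxP : x ∈ D.pts := interior_subset hx
  rcases lt_or_eq_of_le (hxP i) with h | h
  · exact h
  exfalso
  obtain ⟨j, hj⟩ : ∃ j, D.A i j ≠ 0 := by
    by_contra hc
    push_neg at hc
    exact (D.prim i).1 (funext hc)
  set u : Fin n → ℝ := fun k => if k = j then (D.A i j : ℝ) else 0 with hu
  have hcont : Continuous (fun t : ℝ => (fun k => x k + t * u k : Fin n → ℝ)) := by
    apply continuous_pi
    intro k
    exact continuous_const.add (continuous_id.mul continuous_const)
  have hopen : IsOpen ((fun t : ℝ => (fun k => x k + t * u k : Fin n → ℝ)) ⁻¹' interior D.pts) :=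
    isOpen_interior.preimage hcont
  have h0 : (0:ℝ) ∈ (fun t : ℝ => (fun k => x k + t * u k : Fin n → ℝ)) ⁻¹' interior D.pts := by
    simp only [Set.mem_preimage]
    have : (fun k => x k + 0 * u k) = x := by funext k; ring_nf
    rw [this]
    exact hx
  obtain ⟨δ, hδpos, hδ⟩ := Metric.isOpen_iff.mp hopen 0 h0
  have hmem : (fun k => x k + (-(δ/2)) * u k) ∈ D.pts := by
    have : (-(δ/2)) ∈ Metric.ball (0:ℝ) δ := by
      rw [Metric.mem_ball, Real.dist_eq, sub_zero, abs_neg, abs_of_pos (by linarith)]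
      linarith
    exact interior_subset (hδ this)
  have hpair : ipair (D.A i) (fun k => x k + (-(δ/2)) * u k)
      = ipair (D.A i) x + (-(δ/2)) * ((D.A i j : ℝ) * (D.A i j : ℝ)) := by
    unfold ipair
    rw [S10.rpair_add (fun j => (D.A i j : ℝ)) x u (-(δ/2))]
    congr 1
    congr 1
    rw [hu]
    rw [Finset.sum_eq_single j]
    · simp
    · intro k _ hk
      simp [if_neg hk]
    · intro h; exact absurd (Finset.mem_univ j) h
  have hAij : (0:ℝ) < (D.A i j : ℝ) * (D.A i j : ℝ) := by
    have h' : (D.A i j : ℝ) ≠ 0 := by exact_mod_cast hj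
    exact mul_self_pos.mpr h'
  have := hmem i
  rw [hpair, ← h] at this
  nlinarith

lemma S10.qcdInvSet_nonempty : D.qcdInvSet.Nonempty := by
  obtain ⟨x, hx⟩ := S10.exists_strict D
  haveI : Nonempty (Fin m) := Fin.pos_iff_nonempty.mp D.hm
  have hd : 0 < D.dist x := by
    rw [PolyDesc.dist, Finset.lt_inf'_iff]
    intro i _
    have := hx i
    unfold PolyDesc.dF
    linarith
  exact ⟨D.dist x, hd, x, le_refl (D.dist x)⟩

lemma S10.qcdInvSet_bddAbove : BddAbove D.qcdInvSet := by
  obtain ⟨R, hR⟩ := isBounded_iff_forall_norm_le.mp D.bounded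
  set i0 : Fin m := ⟨0, D.hm⟩
  refine ⟨(∑ j, |(D.A i0 j : ℝ)|) * R - (D.b i0 : ℝ), ?_⟩
  rintro s ⟨hs, x, hx⟩
  have hxP : x ∈ D.pts := S10.adj_subset_pts D (le_of_lt hs) hx
  have hb : ipair (D.A i0) x ≤ (∑ j, |(D.A i0 j : ℝ)|) * R := by
    calc ipair (D.A i0) x ≤ |ipair (D.A i0) x| := le_abs_self _
    _ ≤ ∑ j, |(D.A i0 j : ℝ) * x j| := Finset.abs_sum_le_sum_abs _ _
    _ ≤ ∑ j, |(D.A i0 j : ℝ)| * R := by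
        apply Finset.sum_le_sum
        intro j _
        rw [abs_mul]
        apply mul_le_mul_of_nonneg_left _ (abs_nonneg _)
        calc |x j| = ‖x j‖ := rfl
        _ ≤ ‖x‖ := norm_le_pi_norm x j
        _ ≤ R := hR x hxP
    _ = (∑ j, |(D.A i0 j : ℝ)|) * R := by rw [Finset.sum_mul]
  have h1 : D.dist x ≤ D.dF i0 x := Finset.inf'_le _ (Finset.mem_univ i0)
  have h2 : s ≤ D.dist x := hx
  unfold PolyDesc.dF at h1
  linarith

end S10geom

lemma S10.push {n m n' m' : ℕ} (D : PolyDesc n m)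
    (π : (Fin n → ℝ) →ₗ[ℝ] (Fin n' → ℝ))
    (hsurj : Function.Surjective π)
    (hlat : π '' IntPts n = IntPts n')
    {α : ℝ} (hα : 0 < α) (hcan : AlphaCanonical D α)
    (D' : PolyDesc n' m') (hQ : D'.pts = π '' D.pts)
    {s : ℝ} (hs : 0 < s) {x : Fin n → ℝ} (hx : x ∈ D.adj s) :
    π x ∈ D'.adj (α * s) := by
  classical
  have hxP : x ∈ D.pts := S10.adj_subset_pts D hs.le hx
  haveI : Nonempty (Fin m') := Fin.pos_iff_nonempty.mp D'.hm
  show α * s ≤ D'.dist (π x)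
  rw [PolyDesc.dist]
  rw [Finset.le_inf'_iff]
  intro i' _
  -- the pullback integer functional
  set e : Fin n → (Fin n → ℝ) := fun j => (fun k => if k = j then 1 else 0) with he
  have hbasis : ∀ j : Fin n, ∃ w : Fin n' → ℤ, π (e j) = fun k' => (w k' : ℝ) := by
    intro j
    have hmem : e j ∈ IntPts n := by
      refine ⟨fun k => if k = j then 1 else 0, funext fun k => ?_⟩
      by_cases hkj : k = j <;> simp [he, hkj]
    have : π (e j) ∈ IntPts n' := by
      rw [← hlat]
      exact Set.mem_image_of_mem π hmem
    obtain ⟨w, hw⟩ := this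
    exact ⟨w, hw.symm⟩
  choose w hw using hbasis
  set z : Fin n → ℤ := fun j => ∑ j', D'.A i' j' * w j j' with hz
  have key : ∀ y : Fin n → ℝ, ipair z y = ipair (D'.A i') (π y) := by
    intro y
    have hy : π y = ∑ j, y j • π (e j) := by
      have h1 : y = ∑ j, y j • e j := by
        funext k
        rw [Finset.sum_apply, Finset.sum_eq_single k]
        · simp only [Pi.smul_apply, he, smul_eq_mul]
          simp
        · intro j _ hj
          simp only [Pi.smul_apply, he, smul_eq_mul]
          rw [if_neg (Ne.symm hj), mul_zero]
        · intro h; exact absurd (Finset.mem_univ k) h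
      conv_lhs => rw [h1]
      rw [map_sum]
      exact Finset.sum_congr rfl (fun j _ => by rw [map_smul])
    have hπy : ∀ j' : Fin n', π y j' = ∑ j, y j * (w j j' : ℝ) := by
      intro j'
      rw [hy, Finset.sum_apply]
      exact Finset.sum_congr rfl (fun j _ => by rw [Pi.smul_apply, hw j, smul_eq_mul])
    unfold ipair
    calc ∑ j, (z j : ℝ) * y j
        = ∑ j, ∑ j', ((D'.A i' j' : ℝ) * (w j j' : ℝ)) * y j := by
          refine Finset.sum_congr rfl (fun j _ => ?_)
          rw [← Finset.sum_mul]
          congr 1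
          rw [hz]
          push_cast
          rfl
      _ = ∑ j', ∑ j, ((D'.A i' j' : ℝ) * (w j j' : ℝ)) * y j := Finset.sum_comm
      _ = ∑ j', (D'.A i' j' : ℝ) * π y j' := by
          refine Finset.sum_congr rfl (fun j' _ => ?_)
          rw [hπy j', Finset.mul_sum]
          exact Finset.sum_congr rfl (fun j _ => by ring)
  have hzne : z ≠ 0 := by
    intro h0
    have hall : ∀ v : Fin n' → ℝ, ipair (D'.A i') v = 0 := by
      intro v
      obtain ⟨y, rfl⟩ := hsurj v
      rw [← key y]
      unfold ipair
      rw [h0]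
      simp
    have hA0 : ∀ j', D'.A i' j' = 0 := by
      intro j'
      have h2 := hall (fun k => if k = j' then 1 else 0)
      unfold ipair at h2
      rw [Finset.sum_eq_single j'] at h2
      · simp at h2
        exact_mod_cast h2
      · intro k _ hk
        simp [if_neg hk]
      · intro h; exact absurd (Finset.mem_univ j') h
    exact (D'.prim i').1 (funext hA0)
  -- minimize the pullback functional over P
  obtain ⟨x0, hx0P, hx0min⟩ := (S10.pts_isCompact D).exists_isMinOn ⟨x, hxP⟩
    ((S10.continuous_ipair z).continuousOn)
  have hx0min' : ∀ y ∈ D.pts, ipair z x0 ≤ ipair z y := fun y hy => hx0min hy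
  obtain ⟨c, hc0, hcsupp, hca⟩ := S10.farkas D.hm (fun i => (fun j => (D.A i j : ℝ)))
    (fun i => (D.b i : ℝ)) (fun j => (z j : ℝ)) x0 (fun i => hx0P i)
    (fun y hy => hx0min' y hy)
  have hcsupp' : ∀ i ∉ D.active x0, c i = 0 := fun i hi => hcsupp i hi
  have hH := hcan x0 hx0P z hzne ⟨c, hc0, hcsupp', hca⟩
  -- bound every element of the height set
  set d : ℝ := ipair (D'.A i') (π x) - (D'.b i' : ℝ) with hd
  have hπx0Q : (D'.b i' : ℝ) ≤ ipair z x0 := by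
    rw [key x0]
    have : π x0 ∈ D'.pts := by
      rw [hQ]
      exact Set.mem_image_of_mem π hx0P
    exact this i'
  have hub : ∀ t ∈ {t : ℝ | ∃ c' : Fin m → ℝ, (∀ i, 0 ≤ c' i) ∧ (∀ i ∉ D.active x0, c' i = 0) ∧
      ((fun j => ((z j : ℝ))) = ∑ i, c' i • (fun j => ((D.A i j : ℝ)))) ∧ t = ∑ i, c' i},
      t ≤ d / s := by
    rintro t ⟨c', hc'0, hc'supp, hc'rep, rfl⟩
    have heval : ∀ y : Fin n → ℝ, ipair z y = ∑ i, c' i * ipair (D.A i) y := by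
      intro y
      unfold ipair
      calc ∑ j, (z j : ℝ) * y j
          = ∑ j, ∑ i, (c' i * (D.A i j : ℝ)) * y j := by
            refine Finset.sum_congr rfl (fun j _ => ?_)
            rw [← Finset.sum_mul]
            congr 1
            have h3 := congrFun hc'rep j
            try simp only at h3
            rw [h3, Finset.sum_apply]
            exact Finset.sum_congr rfl (fun i _ => by rw [Pi.smul_apply, smul_eq_mul])
        _ = ∑ i, ∑ j, (c' i * (D.A i j : ℝ)) * y j := Finset.sum_comm
        _ = ∑ i, c' i * ∑ j, (D.A i j : ℝ) * y j := by
            refine Finset.sum_congr rfl (fun i _ => ?_)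
            rw [Finset.mul_sum]
            exact Finset.sum_congr rfl (fun j _ => by ring)
    have hdiff : ipair z x - ipair z x0 = ∑ i, c' i * (ipair (D.A i) x - ipair (D.A i) x0) := by
      rw [heval x, heval x0, ← Finset.sum_sub_distrib]
      exact Finset.sum_congr rfl (fun i _ => by ring)
    have hact : ∑ i, c' i * (ipair (D.A i) x - ipair (D.A i) x0)
        = ∑ i, c' i * (ipair (D.A i) x - (D.b i : ℝ)) := by
      refine Finset.sum_congr rfl (fun i _ => ?_)
      by_cases hci : c' i = 0
      · rw [hci, zero_mul, zero_mul]
      · have hiact : i ∈ D.active x0 := by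
          by_contra hiA
          exact hci (hc'supp i hiA)
        have : ipair (D.A i) x0 = (D.b i : ℝ) := hiact
        rw [this]
    have hlow : (∑ i, c' i) * s ≤ ∑ i, c' i * (ipair (D.A i) x - (D.b i : ℝ)) := by
      rw [Finset.sum_mul]
      refine Finset.sum_le_sum (fun i _ => ?_)
      refine mul_le_mul_of_nonneg_left ?_ (hc'0 i)
      have h1 : D.dist x ≤ D.dF i x := Finset.inf'_le _ (Finset.mem_univ i)
      have h2 : s ≤ D.dist x := hx
      unfold PolyDesc.dF at h1
      linarith
    rw [le_div_iff₀ hs]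
    have hkx : ipair z x = ipair (D'.A i') (π x) := key x
    rw [hd]
    linarith [hdiff, hact, hlow, hπx0Q, hkx]
  have ht0 : (∑ i, c i) ∈ {t : ℝ | ∃ c' : Fin m → ℝ, (∀ i, 0 ≤ c' i) ∧
      (∀ i ∉ D.active x0, c' i = 0) ∧
      ((fun j => ((z j : ℝ))) = ∑ i, c' i • (fun j => ((D.A i j : ℝ)))) ∧ t = ∑ i, c' i} :=
    ⟨c, hc0, hcsupp', hca, rfl⟩
  have hds : 0 ≤ d / s := le_trans (Finset.sum_nonneg (fun i _ => hc0 i)) (hub _ ht0)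
  have hch : coneHeight D (D.active x0) (fun j => ((z j : ℝ))) ≤ d / s :=
    Real.sSup_le hub hds
  have hαds : α ≤ d / s := le_trans hH hch
  have : α * s ≤ d := (le_div_iff₀ hs).mp hαds
  show α * s ≤ D'.dF i' (π x)
  unfold PolyDesc.dF
  rw [hd] at this
  linarith

/-- Let `π : ℝⁿ → ℝ^{n'}` be a surjective linear map with
`π(ℤⁿ) = ℤ^{n'}` mapping `P` onto the full-dimensional rational polytope `Q = π(P)`
(with irredundant facet description `D'`), and assume `P` is `α`-canonical for some
`α > 0`. Then `μ(P) ≥ α · μ(Q)`; in particular, if `P` is canonical (`α = 1`),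
then `μ(P) ≥ μ(Q)`. -/
theorem statement10 {n m n' : ℕ} (D : PolyDesc n m)
    (π : (Fin n → ℝ) →ₗ[ℝ] (Fin n' → ℝ))
    (hsurj : Function.Surjective π)
    (hlat : π '' IntPts n = IntPts n')
    (α : ℝ) (hα : 0 < α) (hcan : AlphaCanonical D α)
    {m' : ℕ} (D' : PolyDesc n' m') (hQ : D'.pts = π '' D.pts) :
    α * D'.qcd ≤ D.qcd ∧ (α = 1 → D'.qcd ≤ D.qcd) := by
  have hPne := S10.qcdInvSet_nonempty D
  have hPbdd := S10.qcdInvSet_bddAbove D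
  have hQbdd := S10.qcdInvSet_bddAbove D'
  obtain ⟨s0, hs0⟩ := hPne
  have h1 : 0 < D.qcdInv := lt_of_lt_of_le hs0.1 (le_csSup hPbdd hs0)
  have hmap : ∀ s ∈ D.qcdInvSet, α * s ∈ D'.qcdInvSet := by
    rintro s ⟨hspos, x, hxadj⟩
    exact ⟨mul_pos hα hspos, π x, S10.push D π hsurj hlat hα hcan D' hQ hspos hxadj⟩
  have h2 : α * D.qcdInv ≤ D'.qcdInv := by
    have : D.qcdInv ≤ D'.qcdInv / α := by
      refine csSup_le ⟨s0, hs0⟩ (fun s hsmem => ?_)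
      rw [le_div_iff₀' hα]
      exact le_csSup hQbdd (hmap s hsmem)
    calc α * D.qcdInv ≤ α * (D'.qcdInv / α) := by
          exact mul_le_mul_of_nonneg_left this hα.le
      _ = D'.qcdInv := by field_simp
  have h3 : 0 < D'.qcdInv := lt_of_lt_of_le (mul_pos hα h1) h2
  constructor
  · show α * D'.qcdInv⁻¹ ≤ D.qcdInv⁻¹
    rw [show α * D'.qcdInv⁻¹ = α / D'.qcdInv by rw [div_eq_mul_inv],
      show D.qcdInv⁻¹ = 1 / D.qcdInv by rw [one_div]]
    rw [div_le_div_iff₀ h3 h1]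
    linarith
  · intro hα1
    have h4 : α * D'.qcd ≤ D.qcd := by
      show α * D'.qcdInv⁻¹ ≤ D.qcdInv⁻¹
      rw [show α * D'.qcdInv⁻¹ = α / D'.qcdInv by rw [div_eq_mul_inv],
        show D.qcdInv⁻¹ = 1 / D.qcdInv by rw [one_div]]
      rw [div_le_div_iff₀ h3 h1]
      linarith
    rw [hα1, one_mul] at h4
    exact h4

end
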